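/- Let n = 2m be a positive integer and let a, ξ ∈ F_{2^n} satisfy a ≠ ξ^{2^n−2}. Define f : F_{2^n} → F_{2^n} by f(x) = x^{2^n−2} if x ≠ ξ and f(ξ) = a. Then for all nonzero u, v ∈ F_{2^n}, DLCT_f(u,v) = K_n(u^{−1}v)/2 + 2·(Tr(v·((ξ+u)^{−1} + ξ^{−1})) − Tr(v·((ξ+u)^{−1} + a)) − Tr(u^{−1}v)), where the trace values are viewed as integers in {0,1} and the convention 0^{−1} = 0 is used. -/

import Mathlib

open scoped BigOperators Classical

noncomputable instance (p n : ℕ) [Fact p.Prime] : Fintype (GaloisField p n) :=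
  Fintype.ofFinite _

/-- The absolute trace map from `F_{2^n}` to `F_2`. -/
noncomputable def trF2 (n : ℕ) (x : GaloisField 2 n) : ZMod 2 :=
  Algebra.trace (ZMod 2) (GaloisField 2 n) x

/-- The binary Kloosterman sum `K_m(γ) = Σ_x (-1)^{Tr(γx + x⁻¹)}` (with `0⁻¹ = 0`). -/
noncomputable def kloo (m : ℕ) (γ : GaloisField 2 m) : ℤ :=
  ∑ x : GaloisField 2 m, (-1 : ℤ) ^ (trF2 m (γ * x + x⁻¹)).val

/-- The DLCT entry of `F : F_{2^n} → F_{2^n}` at `(u,v)`. -/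
noncomputable def dlct (n : ℕ) (F : GaloisField 2 n → GaloisField 2 n)
    (u v : GaloisField 2 n) : ℤ :=
  (Nat.card {x : GaloisField 2 n // trF2 n (v * (F (x + u) + F x)) = 0} : ℤ) - 2 ^ (n - 1)

/-- The differential-linear uniformity of `F`: the max of `|DLCT_F(u,v)|` over nonzero `u, v`. -/
noncomputable def dlu (n : ℕ) (F : GaloisField 2 n → GaloisField 2 n) : ℕ :=
  Finset.sup
    (Finset.univ.filter fun p : GaloisField 2 n × GaloisField 2 n => p.1 ≠ 0 ∧ p.2 ≠ 0)
    (fun p => (dlct n F p.1 p.2).natAbs)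


noncomputable def chi (n : ℕ) (z : GaloisField 2 n) : ℤ := (-1) ^ (trF2 n z).val

lemma cardF (n : ℕ) (hn : n ≠ 0) : Fintype.card (GaloisField 2 n) = 2 ^ n := by
  rw [← Nat.card_eq_fintype_card, GaloisField.card 2 n hn]

lemma chi_add (n : ℕ) (z w : GaloisField 2 n) : chi n (z + w) = chi n z * chi n w := by
  unfold chi trF2
  rw [map_add]
  generalize (Algebra.trace (ZMod 2) (GaloisField 2 n) z) = A
  generalize (Algebra.trace (ZMod 2) (GaloisField 2 n) w) = B
  revert A B; decide

lemma chi_zero (n : ℕ) : chi n 0 = 1 := by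
  unfold chi trF2; rw [map_zero]; rfl

lemma chi_eq (n : ℕ) (z : GaloisField 2 n) : chi n z = 1 - 2 * ((trF2 n z).val : ℤ) := by
  unfold chi; generalize (trF2 n z) = A; revert A; decide

lemma chi_ite (n : ℕ) (z : GaloisField 2 n) :
    chi n z = if trF2 n z = 0 then 1 else -1 := by
  unfold chi; generalize (trF2 n z) = A; revert A; decide

lemma trF2_sq (n : ℕ) (z : GaloisField 2 n) : trF2 n (z ^ 2) = trF2 n z := by
  let σ : GaloisField 2 n ≃ₐ[ZMod 2] GaloisField 2 n :=
    AlgEquiv.ofRingEquiv (f := frobeniusEquiv (GaloisField 2 n) 2)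
      (fun c => by
        rw [frobeniusEquiv_def, ← map_pow]
        congr 1
        revert c; decide)
  have := Algebra.trace_eq_of_algEquiv σ z
  simpa [σ, trF2, frobeniusEquiv_def, frobenius_def] using this

lemma chi_sq (n : ℕ) (z : GaloisField 2 n) : chi n (z ^ 2) = chi n z := by
  unfold chi; rw [trF2_sq]

lemma pow_inv (n : ℕ) (hn : 2 ≤ n) (x : GaloisField 2 n) : x ^ (2 ^ n - 2) = x⁻¹ := by
  have h4 : 4 ≤ 2 ^ n := by calc 4 = 2^2 := rfl
                                _ ≤ 2^n := Nat.pow_le_pow_right (by norm_num) hn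
  rcases eq_or_ne x 0 with rfl | hx
  · rw [zero_pow (by omega), inv_zero]
  · have h1 : x ^ (Fintype.card (GaloisField 2 n) - 1) = 1 :=
      FiniteField.pow_card_sub_one_eq_one x hx
    rw [cardF n (by omega)] at h1
    apply eq_inv_of_mul_eq_one_left
    calc x ^ (2 ^ n - 2) * x = x ^ (2 ^ n - 2 + 1) := by rw [pow_succ]
      _ = 1 := by rw [show 2 ^ n - 2 + 1 = 2 ^ n - 1 by omega, h1]

-- Kloosterman sum is invariant under squaring the parameter
lemma kloo_sq (n : ℕ) (c : GaloisField 2 n) : kloo n (c ^ 2) = kloo n c := by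
  have hbij : Function.Bijective (fun y : GaloisField 2 n => y ^ 2) := by
    have hinj : Function.Injective (fun y : GaloisField 2 n => y ^ 2) := by
      have := frobenius_inj (GaloisField 2 n) 2
      intro a b hab
      exact this hab
    exact Finite.injective_iff_bijective.mp hinj
  refine (Fintype.sum_bijective _ hbij (fun y => chi n (c * y + y⁻¹))
    (fun x => chi n (c ^ 2 * x + x⁻¹)) (fun y => ?_)).symm
  show (chi n (c * y + y⁻¹) = chi n (c ^ 2 * y ^ 2 + (y ^ 2)⁻¹))
  have : c ^ 2 * y ^ 2 + (y ^ 2)⁻¹ = (c * y + y⁻¹) ^ 2 := by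
    rw [CharTwo.add_sq, mul_pow, inv_pow]
  rw [this, chi_sq]

lemma trF2_exists (n : ℕ) : ∃ b : GaloisField 2 n, trF2 n b ≠ 0 := by
  have h := (traceForm_nondegenerate (ZMod 2) (GaloisField 2 n)).1 1
  by_contra hc
  push_neg at hc
  have : (1 : GaloisField 2 n) = 0 := by
    apply h
    intro y
    rw [Algebra.traceForm_apply, one_mul]
    exact hc y
  exact one_ne_zero this

lemma sum_chi (n : ℕ) (c : GaloisField 2 n) (hc : c ≠ 0) :
    ∑ x : GaloisField 2 n, chi n (c * x) = 0 := by
  obtain ⟨b, hb⟩ := trF2_exists n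
  have key : ∑ x : GaloisField 2 n, chi n (c * x)
      = ∑ x : GaloisField 2 n, chi n (c * (x + c⁻¹ * b)) :=
    (Fintype.sum_equiv (Equiv.addRight (c⁻¹ * b)) _ _ (fun x => rfl)).symm
  have hcb : c * (c⁻¹ * b) = b := by field_simp
  have hchib : chi n b = -1 := by
    unfold chi
    have : (trF2 n b).val = 1 := by
      revert hb; generalize (trF2 n b) = A; revert A; decide
    rw [this]; ring
  have hneg : ∀ x, chi n (c * (x + c⁻¹ * b)) = - chi n (c * x) := by
    intro x
    rw [mul_add, chi_add, hcb, hchib]; ring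
  simp only [hneg, Finset.sum_neg_distrib] at key
  omega

section Subst
variable (n : ℕ)
local notation "F" => GaloisField 2 n

lemma add_self (z : F) : z + z = 0 := CharTwo.add_self_eq_zero z

lemma htwo : (2 : F) = 0 := by
  have := add_self n 1; linear_combination this

-- substitution x ↦ (x+u)/x
lemma sum2 (u v : F) (hu : u ≠ 0) :
    ∑ x ∈ (Finset.univ \ {0, u}), chi n (v * ((x + u)⁻¹ + x⁻¹))
      = ∑ r ∈ (Finset.univ \ {0, 1}), chi n ((u⁻¹ * v) * r + (u⁻¹ * v) * r⁻¹) := by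
  have h2 := htwo n
  have hadd : ∀ z w : F, z + w = 0 → z = w := fun z w h => by linear_combination h - w * h2
  have hmem : ∀ z w : F, z ∈ (Finset.univ \ {0, w} : Finset F) ↔ z ≠ 0 ∧ z ≠ w := by
    intro z w; simp [Finset.mem_sdiff]
  refine Finset.sum_nbij' (i := fun x => (x + u) * x⁻¹) (j := fun r => u * (r + 1)⁻¹)
    ?_ ?_ ?_ ?_ ?_
  · intro x hx
    rw [hmem] at hx ⊢
    obtain ⟨hx0, hxu⟩ := hx
    have hxu0 : x + u ≠ 0 := fun h => hxu (hadd _ _ h)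
    refine ⟨mul_ne_zero hxu0 (inv_ne_zero hx0), fun h => hu ?_⟩
    replace h : (x + u) * x⁻¹ = 1 := h
    field_simp at h
    linear_combination h
  · intro r hr
    rw [hmem] at hr ⊢
    obtain ⟨hr0, hr1⟩ := hr
    have hr10 : r + 1 ≠ 0 := fun h => hr1 (hadd _ _ h)
    refine ⟨mul_ne_zero hu (inv_ne_zero hr10), fun h => hr0 ?_⟩
    replace h : u * (r + 1)⁻¹ = u := h
    have h1 : (r + 1)⁻¹ = 1 := mul_left_cancel₀ hu (by rw [h, mul_one])
    have h1' : r + 1 = 1 := by rw [← inv_inv (r + 1), h1, inv_one]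
    linear_combination h1'
  · intro x hx
    rw [hmem] at hx
    obtain ⟨hx0, hxu⟩ := hx
    have hxu0 : x + u ≠ 0 := fun h => hxu (hadd _ _ h)
    show u * ((x + u) * x⁻¹ + 1)⁻¹ = x
    have key : (x + u) * x⁻¹ + 1 = u * x⁻¹ := by
      field_simp
      linear_combination x * h2
    rw [key, mul_inv, inv_inv]
    field_simp
  · intro r hr
    rw [hmem] at hr
    obtain ⟨hr0, hr1⟩ := hr
    have hr10 : r + 1 ≠ 0 := fun h => hr1 (hadd _ _ h)
    show (u * (r + 1)⁻¹ + u) * (u * (r + 1)⁻¹)⁻¹ = r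
    have key : u * (r + 1)⁻¹ + u = u * r * (r + 1)⁻¹ := by
      field_simp
      linear_combination h2
    rw [key, mul_inv, inv_inv]
    field_simp
  · intro x hx
    rw [hmem] at hx
    obtain ⟨hx0, hxu⟩ := hx
    have hxu0 : x + u ≠ 0 := fun h => hxu (hadd _ _ h)
    show chi n (v * ((x + u)⁻¹ + x⁻¹)) = chi n ((u⁻¹ * v) * ((x + u) * x⁻¹) + (u⁻¹ * v) * ((x + u) * x⁻¹)⁻¹)
    congr 1
    rw [mul_inv, inv_inv]
    field_simp
    linear_combination (-(v * x^2)) * h2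


lemma sum1 (c : F) (hc : c ≠ 0) :
    ∑ r ∈ (Finset.univ \ {0, 1}), chi n (c * r + c * r⁻¹) = kloo n c - 2 := by
  have h2 := htwo n
  -- the sum over nonzero r
  have hB : ∑ r ∈ (Finset.univ \ {0} : Finset F), chi n (c * r + c * r⁻¹)
      = ∑ y ∈ (Finset.univ \ {0} : Finset F), chi n (c ^ 2 * y + y⁻¹) := by
    refine (Finset.sum_nbij' (i := fun y => c * y) (j := fun r => c⁻¹ * r) ?_ ?_ ?_ ?_ ?_).symm
    · intro y hy
      simp only [Finset.mem_sdiff, Finset.mem_univ, Finset.mem_singleton, true_and] at hy ⊢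
      exact mul_ne_zero hc hy
    · intro r hr
      simp only [Finset.mem_sdiff, Finset.mem_univ, Finset.mem_singleton, true_and] at hr ⊢
      exact mul_ne_zero (inv_ne_zero hc) hr
    · intro y hy; field_simp
    · intro r hr; field_simp
    · intro y hy
      simp only [Finset.mem_sdiff, Finset.mem_univ, Finset.mem_singleton, true_and] at hy
      show chi n (c ^ 2 * y + y⁻¹) = chi n (c * (c * y) + c * (c * y)⁻¹)
      congr 1
      rw [mul_inv]
      field_simp
  have hkloo : ∑ y ∈ (Finset.univ \ {0} : Finset F), chi n (c ^ 2 * y + y⁻¹)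
      = kloo n (c ^ 2) - 1 := by
    have h0 : ({0} : Finset F) ⊆ Finset.univ := Finset.subset_univ _
    have := Finset.sum_sdiff (f := fun y : F => chi n (c ^ 2 * y + y⁻¹)) h0
    have h00 : ∑ y ∈ ({0} : Finset F), chi n (c ^ 2 * y + y⁻¹) = 1 := by
      rw [Finset.sum_singleton, mul_zero, inv_zero, add_zero, chi_zero]
    have hkl : kloo n (c ^ 2) = ∑ y : F, chi n (c ^ 2 * y + y⁻¹) := rfl
    rw [hkl]
    linarith [this, h00]
  have h1' : ((1 : F) ∈ (Finset.univ \ {0} : Finset F)) := by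
    simp only [Finset.mem_sdiff, Finset.mem_univ, Finset.mem_singleton, true_and]
    exact one_ne_zero
  have hsplit : (Finset.univ \ {0, 1} : Finset F) = (Finset.univ \ {0}) \ {1} := by
    ext z; simp only [Finset.mem_sdiff, Finset.mem_univ, Finset.mem_insert,
      Finset.mem_singleton, true_and]; tauto
  have h1sub : ({1} : Finset F) ⊆ Finset.univ \ {0} := by
    intro z hz; simp only [Finset.mem_singleton] at hz; subst hz; exact h1'
  have := Finset.sum_sdiff (f := fun r : F => chi n (c * r + c * r⁻¹)) h1sub
  have hval1 : ∑ r ∈ ({1} : Finset F), chi n (c * r + c * r⁻¹) = 1 := by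
    rw [Finset.sum_singleton, inv_one, mul_one, add_self, chi_zero]
  rw [hsplit]
  rw [hB, hkloo, kloo_sq] at this
  linarith [this, hval1]

lemma Sg (u v : F) (hu : u ≠ 0) (hv : v ≠ 0) :
    ∑ x : F, chi n (v * ((x + u)⁻¹ + x⁻¹))
      = kloo n (u⁻¹ * v) + 2 * chi n (u⁻¹ * v) - 2 := by
  have h2 := htwo n
  have hc : u⁻¹ * v = u⁻¹ * v := rfl
  have h0u : ({0, u} : Finset F) ⊆ Finset.univ := Finset.subset_univ _
  have hsd := Finset.sum_sdiff (f := fun x : F => chi n (v * ((x + u)⁻¹ + x⁻¹))) h0u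
  have hpair : ∑ x ∈ ({0, u} : Finset F), chi n (v * ((x + u)⁻¹ + x⁻¹))
      = 2 * chi n (u⁻¹ * v) := by
    rw [Finset.sum_pair (fun h => hu h.symm)]
    have e0 : v * ((0 + u)⁻¹ + (0:F)⁻¹) = u⁻¹ * v := by
      rw [zero_add, inv_zero, add_zero, mul_comm]
    have eu : v * ((u + u)⁻¹ + u⁻¹) = u⁻¹ * v := by
      rw [add_self, inv_zero, zero_add, mul_comm]
    rw [e0, eu]; ring
  have hmid := sum2 n u v hu
  have hlast := sum1 n (u⁻¹ * v) (mul_ne_zero (inv_ne_zero hu) hv)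
  rw [hmid, hlast] at hsd
  linarith [hsd, hpair]

end Subst

lemma count_eq (n : ℕ) (hn : n ≠ 0) (t : GaloisField 2 n → GaloisField 2 n) :
    ((Finset.univ.filter fun x : GaloisField 2 n => trF2 n (t x) = 0).card : ℤ) * 2
      = 2 ^ n + ∑ x : GaloisField 2 n, chi n (t x) := by
  have h1 : ∀ x : GaloisField 2 n,
      chi n (t x) = 2 * (if trF2 n (t x) = 0 then (1 : ℤ) else 0) - 1 := by
    intro x
    rw [chi_ite]
    split <;> ring
  symm
  calc (2 : ℤ) ^ n + ∑ x : GaloisField 2 n, chi n (t x)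
      = 2 ^ n + ∑ x : GaloisField 2 n,
          (2 * (if trF2 n (t x) = 0 then (1 : ℤ) else 0) - 1) := by
        rw [Finset.sum_congr rfl (fun x _ => h1 x)]
    _ = 2 ^ n + (2 * ∑ x : GaloisField 2 n,
          (if trF2 n (t x) = 0 then (1 : ℤ) else 0)
          - (Fintype.card (GaloisField 2 n) : ℤ)) := by
        rw [Finset.sum_sub_distrib, ← Finset.mul_sum]
        simp [Finset.card_univ]
    _ = ((Finset.univ.filter fun x : GaloisField 2 n => trF2 n (t x) = 0).card : ℤ) * 2 := by
        rw [Finset.sum_boole, cardF n hn]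
        push_cast
        ring

lemma natcard_eq (n : ℕ) (t : GaloisField 2 n → GaloisField 2 n) :
    (Nat.card {x : GaloisField 2 n // trF2 n (t x) = 0} : ℤ)
      = ((Finset.univ.filter fun x : GaloisField 2 n => trF2 n (t x) = 0).card : ℤ) := by
  rw [Nat.card_eq_fintype_card]
  congr 1
  rw [Fintype.card_subtype]


/-- Theorem: for `n = 2m`, `a ≠ ξ^{2^n-2}`, and `f` equal to the inverse function
`x ↦ x^{2^n-2}` except `f(ξ) = a`, for all nonzero `u, v`:
`DLCT_f(u,v) = K_n(u⁻¹v)/2 + 2(Tr(v((ξ+u)⁻¹+ξ⁻¹)) - Tr(v((ξ+u)⁻¹+a)) - Tr(u⁻¹v))`. -/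
theorem stmt11 (m : ℕ) (hm : 0 < m)
    (a ξ : GaloisField 2 (2 * m)) (ha : a ≠ ξ ^ (2 ^ (2 * m) - 2))
    (f : GaloisField 2 (2 * m) → GaloisField 2 (2 * m))
    (hf : ∀ x : GaloisField 2 (2 * m), x ≠ ξ → f x = x ^ (2 ^ (2 * m) - 2))
    (hfξ : f ξ = a)
    (u v : GaloisField 2 (2 * m)) (hu : u ≠ 0) (hv : v ≠ 0) :
    dlct (2 * m) f u v =
      kloo (2 * m) (u⁻¹ * v) / 2 +
        2 * (((trF2 (2 * m) (v * ((ξ + u)⁻¹ + ξ⁻¹))).val : ℤ) -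
              ((trF2 (2 * m) (v * ((ξ + u)⁻¹ + a))).val : ℤ) -
              ((trF2 (2 * m) (u⁻¹ * v)).val : ℤ)) := by
  have hn2 : 2 ≤ 2 * m := by omega
  have hn0 : 2 * m ≠ 0 := by omega
  have h2 := htwo (2 * m)
  have hξu : ξ + u ≠ ξ := fun h => hu (by linear_combination h)
  have hfξu : f (ξ + u) = (ξ + u)⁻¹ := by rw [hf _ hξu, pow_inv _ hn2]
  have hf' : ∀ x, x ≠ ξ → f x = x⁻¹ := fun x hx => by rw [hf x hx, pow_inv _ hn2]
  -- split the character sum for f into that of the inverse function plus corrections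
  have hsplit : ∑ x : GaloisField 2 (2 * m), chi (2 * m) (v * (f (x + u) + f x))
      = ∑ x : GaloisField 2 (2 * m), chi (2 * m) (v * ((x + u)⁻¹ + x⁻¹))
        + 2 * chi (2 * m) (v * ((ξ + u)⁻¹ + a))
        - 2 * chi (2 * m) (v * ((ξ + u)⁻¹ + ξ⁻¹)) := by
    have hd : ∑ x : GaloisField 2 (2 * m),
        (chi (2 * m) (v * (f (x + u) + f x)) - chi (2 * m) (v * ((x + u)⁻¹ + x⁻¹)))
        = ∑ x ∈ ({ξ, ξ + u} : Finset (GaloisField 2 (2 * m))),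
          (chi (2 * m) (v * (f (x + u) + f x)) - chi (2 * m) (v * ((x + u)⁻¹ + x⁻¹))) := by
      refine (Finset.sum_subset (Finset.subset_univ _) ?_).symm
      intro x _ hx
      simp only [Finset.mem_insert, Finset.mem_singleton] at hx
      push_neg at hx
      obtain ⟨hx1, hx2⟩ := hx
      have hxu : x + u ≠ ξ := by
        intro h
        exact hx2 (by linear_combination h - u * h2)
      rw [hf' _ hx1, hf' _ hxu, sub_self]
    have hξuu : ξ + u + u = ξ := by linear_combination u * h2
    have hpair : ∑ x ∈ ({ξ, ξ + u} : Finset (GaloisField 2 (2 * m))),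
        (chi (2 * m) (v * (f (x + u) + f x)) - chi (2 * m) (v * ((x + u)⁻¹ + x⁻¹)))
        = 2 * chi (2 * m) (v * ((ξ + u)⁻¹ + a))
          - 2 * chi (2 * m) (v * ((ξ + u)⁻¹ + ξ⁻¹)) := by
      rw [Finset.sum_pair (fun h => hξu h.symm)]
      have t1 : v * (f (ξ + u) + f ξ) = v * ((ξ + u)⁻¹ + a) := by rw [hfξu, hfξ]
      have t2 : v * (f (ξ + u + u) + f (ξ + u)) = v * ((ξ + u)⁻¹ + a) := by
        rw [hξuu, hfξ, hfξu]; ring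
      have t3 : v * ((ξ + u + u)⁻¹ + (ξ + u)⁻¹) = v * ((ξ + u)⁻¹ + ξ⁻¹) := by
        rw [hξuu]; ring
      rw [t1, t2, t3]
      ring
    rw [hpair] at hd
    rw [Finset.sum_sub_distrib] at hd
    linarith [hd]
  have hSg := Sg (2 * m) u v hu hv
  have hcount := count_eq (2 * m) hn0 (fun x => v * (f (x + u) + f x))
  have hNc := natcard_eq (2 * m) (fun x => v * (f (x + u) + f x))
  have hpow : (2 : ℤ) ^ (2 * m) = 2 * 2 ^ (2 * m - 1) := by
    rw [← pow_succ']
    congr 1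
    omega
  -- translate chi values into trace values
  have e0 := chi_eq (2 * m) (u⁻¹ * v)
  have e1 := chi_eq (2 * m) (v * ((ξ + u)⁻¹ + ξ⁻¹))
  have e2 := chi_eq (2 * m) (v * ((ξ + u)⁻¹ + a))
  set T0 := ((trF2 (2 * m) (u⁻¹ * v)).val : ℤ)
  set T1 := ((trF2 (2 * m) (v * ((ξ + u)⁻¹ + ξ⁻¹))).val : ℤ)
  set T2 := ((trF2 (2 * m) (v * ((ξ + u)⁻¹ + a))).val : ℤ)
  set N := ((Finset.univ.filter fun x : GaloisField 2 (2 * m) =>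
      trF2 (2 * m) (v * (f (x + u) + f x)) = 0).card : ℤ)
  have hK : kloo (2 * m) (u⁻¹ * v)
      = 2 * (N - 2 ^ (2 * m - 1) - 2 * (T1 - T2 - T0)) := by
    linarith [hsplit, hSg, hcount, hpow, e0, e1, e2]
  unfold dlct
  rw [hNc, hK, Int.mul_ediv_cancel_left _ two_ne_zero]
  ring
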